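/- Let G be an additive abelian group and let β₁, β₂ : G × G → Circle be bicharacters, i.e. each is a group homomorphism in each variable separately. Then β₁ and β₂ are cohomologous (there exists ρ : G → Circle with β₁(x,y)·ρ(x+y) = β₂(x,y)·ρ(x)·ρ(y) for all x,y ∈ G) if and only if the bicharacter β(x,y) := β₁(x,y)·β₂(x,y)⁻¹ is symmetric, i.e. β(x,y) = β(y,x) for all x,y ∈ G. -/

import Mathlib

open CategoryTheory

universe u

structure BichExt (G : Type u) (A : Type u) where
  fst : G
  snd : A

theorem symm_bichar_split {G : Type u} [AddCommGroup G] (β : G → G → Circle)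
    (hl : ∀ x x' y : G, β (x + x') y = β x y * β x' y)
    (hr : ∀ x y y' : G, β x (y + y') = β x y * β x y')
    (hs : ∀ x y : G, β x y = β y x) :
    ∃ ρ : G → Circle, ∀ x y : G, ρ x * ρ y = β x y * ρ (x + y) := by
  classical
  set A := ULift.{u} (Additive Circle) with hA
  let b : G → G → A := fun x y => ⟨Additive.ofMul (β x y)⟩
  have h0l : ∀ y, β 0 y = 1 := by
    intro y
    have := hl 0 0 y
    rw [add_zero] at this
    exact (left_eq_mul.mp this)
  have h0r : ∀ x, β x 0 = 1 := fun x => by rw [hs]; exact h0l x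
  have hbl : ∀ x x' y : G, b (x + x') y = b x y + b x' y := by
    intro x x' y
    show (⟨Additive.ofMul (β (x+x') y)⟩ : A) = ⟨Additive.ofMul (β x y * β x' y)⟩
    rw [hl]
  have hbr : ∀ x y y' : G, b x (y + y') = b x y + b x y' := by
    intro x y y'
    show (⟨Additive.ofMul (β x (y+y'))⟩ : A) = ⟨Additive.ofMul (β x y * β x y')⟩
    rw [hr]
  have hbs : ∀ x y : G, b x y = b y x := fun x y => by simp only [b, hs x y]
  have hb0l : ∀ y, b 0 y = 0 := by
    intro y
    show (⟨Additive.ofMul (β 0 y)⟩ : A) = 0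
    rw [h0l]; rfl
  have hb0r : ∀ x, b x 0 = 0 := by
    intro x
    show (⟨Additive.ofMul (β x 0)⟩ : A) = 0
    rw [h0r]; rfl
  letI : Zero (BichExt G A) := ⟨⟨0, 0⟩⟩
  letI : Add (BichExt G A) := ⟨fun p q => ⟨p.fst + q.fst, p.snd + q.snd + b p.fst q.fst⟩⟩
  letI : Neg (BichExt G A) := ⟨fun p => ⟨-p.fst, -p.snd - b p.fst (-p.fst)⟩⟩
  letI : AddCommGroup (BichExt G A) :=
  { add := (· + ·)
    zero := 0
    neg := (- ·)
    nsmul := nsmulRec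
    zsmul := zsmulRec
    add_assoc := by
      rintro ⟨x, a⟩ ⟨y, c⟩ ⟨z, d⟩
      show (⟨x + y + z, a + c + b x y + d + b (x+y) z⟩ : BichExt G A)
        = ⟨x + (y + z), a + (c + d + b y z) + b x (y + z)⟩
      have h2 : a + c + b x y + d + b (x+y) z = a + (c + d + b y z) + b x (y + z) := by
        rw [hbl, hbr]; abel
      rw [add_assoc, h2]
    zero_add := by
      rintro ⟨x, a⟩
      show (⟨0 + x, 0 + a + b 0 x⟩ : BichExt G A) = ⟨x, a⟩
      rw [hb0l, zero_add, zero_add, add_zero]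
    add_zero := by
      rintro ⟨x, a⟩
      show (⟨x + 0, a + 0 + b x 0⟩ : BichExt G A) = ⟨x, a⟩
      rw [hb0r, add_zero, add_zero, add_zero]
    neg_add_cancel := by
      rintro ⟨x, a⟩
      show (⟨-x + x, (-a - b x (-x)) + a + b (-x) x⟩ : BichExt G A) = ⟨0, 0⟩
      rw [neg_add_cancel, hbs (-x) x]
      congr 1
      abel
    add_comm := by
      rintro ⟨x, a⟩ ⟨y, c⟩
      show (⟨x + y, a + c + b x y⟩ : BichExt G A) = ⟨y + x, c + a + b y x⟩
      rw [add_comm x y, add_comm a c, hbs] }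
  have add_def : ∀ p q : BichExt G A,
      p + q = ⟨p.fst + q.fst, p.snd + q.snd + b p.fst q.fst⟩ := fun _ _ => rfl
  let f : A →+ BichExt G A :=
  { toFun := fun a => ⟨0, a⟩
    map_zero' := rfl
    map_add' := by
      intro a c
      rw [add_def]
      show (⟨0, a + c⟩ : BichExt G A) = ⟨0 + 0, a + c + b 0 0⟩
      rw [hb0l, add_zero, add_zero] }
  let φ : ℝ →+ A := (AddEquiv.ulift.symm.toAddMonoidHom : Additive Circle →+ A).comp Circle.expHom
  have hsurj : Function.Surjective φ := by
    intro z
    refine ⟨Complex.arg (Additive.toMul z.down : Circle), ?_⟩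
    show (⟨Additive.ofMul (Circle.exp _)⟩ : A) = z
    rw [Circle.exp_arg]
    rfl
  haveI : DivisibleBy A ℤ := Function.Surjective.divisibleBy (α := ℤ) φ hsurj (fun a n => map_zsmul φ n a)
  haveI : Injective (AddCommGrpCat.of A) := AddCommGrpCat.injective_of_divisible A
  haveI mono : Mono (AddCommGrpCat.ofHom f) := by
    rw [AddCommGrpCat.mono_iff_injective]
    intro a c h
    exact congrArg BichExt.snd h
  obtain ⟨h, hh⟩ := Injective.factors (𝟙 (AddCommGrpCat.of A)) (AddCommGrpCat.ofHom f)
  let h' : BichExt G A →+ A := h.hom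
  have hretr : ∀ a : A, h' (f a) = a := by
    intro a
    have := congrArg (fun g => g a) hh
    simpa using this
  refine ⟨fun x => Additive.toMul (h' ⟨x, 0⟩).down, fun x y => ?_⟩
  have key : (⟨x, 0⟩ : BichExt G A) + ⟨y, 0⟩ = (⟨x + y, 0⟩ : BichExt G A) + f (b x y) := by
    rw [add_def, add_def]
    show (⟨x + y, 0 + 0 + b x y⟩ : BichExt G A) = ⟨x + y + 0, 0 + b x y + b (x+y) 0⟩
    simp only [hb0r, add_zero, zero_add]
  have hk := congrArg h' key
  rw [map_add, map_add, hretr] at hk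
  calc Additive.toMul (h' ⟨x, 0⟩).down * Additive.toMul (h' ⟨y, 0⟩).down
      = Additive.toMul (((h' ⟨x, 0⟩ : A) + (h' ⟨y, 0⟩ : A)).down) := rfl
    _ = Additive.toMul (((h' ⟨x + y, 0⟩ : A) + b x y).down) := by rw [hk]
    _ = Additive.toMul (h' ⟨x + y, 0⟩).down * β x y := rfl
    _ = β x y * Additive.toMul (h' ⟨x + y, 0⟩).down := mul_comm _ _

/-- Two Circle-valued bicharacters on an additive abelian group are cohomologous
if and only if their quotient is a symmetric bicharacter. -/
theorem bicharacters_cohomologous_iff_quotient_symmetric {G : Type*} [AddCommGroup G]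
    (β₁ β₂ : G → G → Circle)
    (h₁add_left : ∀ x x' y : G, β₁ (x + x') y = β₁ x y * β₁ x' y)
    (h₁add_right : ∀ x y y' : G, β₁ x (y + y') = β₁ x y * β₁ x y')
    (h₂add_left : ∀ x x' y : G, β₂ (x + x') y = β₂ x y * β₂ x' y)
    (h₂add_right : ∀ x y y' : G, β₂ x (y + y') = β₂ x y * β₂ x y') :
    (∃ ρ : G → Circle, ∀ x y : G, β₁ x y * ρ (x + y) = β₂ x y * ρ x * ρ y) ↔
      (∀ x y : G, β₁ x y * (β₂ x y)⁻¹ = β₁ y x * (β₂ y x)⁻¹) := by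
  constructor
  · rintro ⟨ρ, hρ⟩ x y
    have c1 := congrArg (Subtype.val : Circle → ℂ) (hρ x y)
    have c2 := congrArg (Subtype.val : Circle → ℂ) (hρ y x)
    rw [add_comm y x] at c2
    apply Subtype.coe_injective
    push_cast at c1 c2 ⊢
    have hs : ((ρ (x + y) : ℂ)) ≠ 0 := Circle.coe_ne_zero _
    have h2xy : ((β₂ x y : ℂ)) ≠ 0 := Circle.coe_ne_zero _
    have h2yx : ((β₂ y x : ℂ)) ≠ 0 := Circle.coe_ne_zero _
    field_simp
    apply mul_left_cancel₀ hs
    linear_combination (β₂ y x : ℂ) * c1 - (β₂ x y : ℂ) * c2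
  · intro hsym
    set β : G → G → Circle := fun x y => β₁ x y * (β₂ x y)⁻¹ with hβ
    have hl : ∀ x x' y : G, β (x + x') y = β x y * β x' y := by
      intro x x' y
      show β₁ (x + x') y * (β₂ (x + x') y)⁻¹
          = β₁ x y * (β₂ x y)⁻¹ * (β₁ x' y * (β₂ x' y)⁻¹)
      rw [h₁add_left, h₂add_left, mul_inv]
      exact mul_mul_mul_comm _ _ _ _
    have hr : ∀ x y y' : G, β x (y + y') = β x y * β x y' := by
      intro x y y'
      show β₁ x (y + y') * (β₂ x (y + y'))⁻¹
          = β₁ x y * (β₂ x y)⁻¹ * (β₁ x y' * (β₂ x y')⁻¹)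
      rw [h₁add_right, h₂add_right, mul_inv]
      exact mul_mul_mul_comm _ _ _ _
    obtain ⟨ρ, hρ⟩ := symm_bichar_split β hl hr hsym
    refine ⟨ρ, fun x y => ?_⟩
    apply Subtype.coe_injective
    have c := congrArg (Subtype.val : Circle → ℂ) (hρ x y)
    push_cast [hβ] at c ⊢
    have h2 : ((β₂ x y : ℂ)) ≠ 0 := Circle.coe_ne_zero _
    field_simp at c
    linear_combination -c
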